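/- Let a = (α₁, α₂) and b = (β₁, β₂) be elements of ℤ² with gcd(α₁, α₂) = 1, gcd(β₁, β₂) = 1, and det(a, b) > 0. Then there exist a natural number n and a finite sequence c₀, c₁, …, c_{n+1} of elements of ℤ² such that c₀ = a, c_{n+1} = b, det(c_j, c_{j+1}) = 1 for every j with 0 ≤ j ≤ n, and det(c_{k−1}, c_{k+1}) > 1 for every k with 1 ≤ k ≤ n. -/

import Mathlib

/-- The 2×2 determinant of two vectors in `ℤ × ℤ`. -/
def det2 (u v : ℤ × ℤ) : ℤ := u.1 * v.2 - u.2 * v.1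

private lemma cramer (u v w : ℤ × ℤ) (h : det2 u v = 1) :
    w.1 = det2 w v * u.1 + det2 u w * v.1 ∧
    w.2 = det2 w v * u.2 + det2 u w * v.2 := by
  unfold det2 at *
  refine ⟨by linear_combination (-w.1) * h, by linear_combination (-w.2) * h⟩

private lemma aux : ∀ d : ℕ, 0 < d → ∀ a b : ℤ × ℤ,
    Int.gcd a.1 a.2 = 1 → Int.gcd b.1 b.2 = 1 → det2 a b = (d : ℤ) →
    ∃ (n : ℕ) (c : ℕ → ℤ × ℤ),
      c 0 = a ∧ c (n + 1) = b ∧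
      (∀ j, j ≤ n → det2 (c j) (c (j + 1)) = 1) ∧
      (∀ k, 1 ≤ k → k ≤ n → 1 < det2 (c (k - 1)) (c (k + 1))) ∧
      (∀ j, j ≤ n + 1 → 0 ≤ det2 (c j) b) := by
  intro d
  induction d using Nat.strong_induction_on with
  | _ d ih =>
    intro hd a b ha hb hdet
    rcases eq_or_lt_of_le (show 1 ≤ d from hd) with h1 | h1
    · -- base case d = 1
      refine ⟨0, fun j => if j = 0 then a else b, by simp, by simp, ?_, ?_, ?_⟩
      · intro j hj
        interval_cases j
        have hd1 : det2 a b = 1 := by rw [hdet]; omega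
        simpa using hd1
      · intro k hk1 hk2; omega
      · intro j hj
        interval_cases j
        · simpa using le_of_lt (by rw [hdet]; positivity : (0:ℤ) < det2 a b) |>.trans_eq rfl
        · simp only [if_neg (by omega : (1:ℕ) ≠ 0)]
          unfold det2; ring_nf; omega
    · -- inductive case 1 < d
      have hdpos : (0:ℤ) < (d:ℤ) := by exact_mod_cast hd
      have hbez : a.1 * Int.gcdA a.1 a.2 + a.2 * Int.gcdB a.1 a.2 = 1 := by
        have h := Int.gcd_eq_gcd_ab a.1 a.2
        rw [ha] at h; exact_mod_cast h.symm
      set c0 : ℤ × ℤ := (-(Int.gcdB a.1 a.2), Int.gcdA a.1 a.2) with hc0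
      have hac0 : det2 a c0 = 1 := by
        unfold det2; rw [hc0]; dsimp; linarith
      set k : ℤ := -((det2 c0 b - 1) / d) with hk
      set c : ℤ × ℤ := (c0.1 + k * a.1, c0.2 + k * a.2) with hc
      have hac : det2 a c = 1 := by
        unfold det2 at hac0 ⊢; rw [hc]; dsimp; linarith [hac0]
      have hcb : det2 c b = (det2 c0 b - 1) % d + 1 := by
        have h2 : det2 c b = det2 c0 b + k * det2 a b := by
          unfold det2; rw [hc]; dsimp; ring
        rw [h2, hdet, hk, Int.emod_def]; ring
      have hmod0 : 0 ≤ (det2 c0 b - 1) % d := Int.emod_nonneg _ (by positivity)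
      have hmodd : (det2 c0 b - 1) % d < d := Int.emod_lt_of_pos _ hdpos
      have hs1 : 1 ≤ det2 c b := by omega
      have hsled : det2 c b ≤ d := by omega
      have hne : det2 c b ≠ d := by
        intro hsd
        have hw := cramer a c b hac
        have hbc : det2 b c = -(d:ℤ) := by
          unfold det2 at hsd ⊢; linarith
        have hb1 : (d:ℤ) ∣ b.1 := ⟨c.1 - a.1, by rw [hw.1, hbc, hdet]; ring⟩
        have hb2 : (d:ℤ) ∣ b.2 := ⟨c.2 - a.2, by rw [hw.2, hbc, hdet]; ring⟩
        have hdg : (d:ℤ) ∣ ((Int.gcd b.1 b.2 : ℕ) : ℤ) := Int.dvd_coe_gcd hb1 hb2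
        rw [hb] at hdg
        have := Int.le_of_dvd one_pos hdg
        omega
      have hsd : det2 c b < d := lt_of_le_of_ne hsled hne
      have hgc : Int.gcd c.1 c.2 = 1 := by
        have h1 : ((Int.gcd c.1 c.2 : ℕ) : ℤ) ∣ 1 := by
          rw [← hac]
          exact dvd_sub ((Int.gcd_dvd_right _ _).mul_left _) ((Int.gcd_dvd_left _ _).mul_left _)
        have h2 : Int.gcd c.1 c.2 ∣ 1 := by exact_mod_cast h1
        exact Nat.dvd_one.mp h2
      set s : ℕ := (det2 c b).toNat with hsdef
      have hsval : det2 c b = (s : ℤ) := by rw [hsdef]; omega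
      have hspos : 0 < s := by omega
      have hslt : s < d := by omega
      obtain ⟨n', c', h0, hN, hcons, hknee, hpos⟩ :=
        ih s hslt hspos c b hgc hb hsval
      refine ⟨n' + 1, fun j => match j with | 0 => a | Nat.succ m => c' m,
        rfl, hN, ?_, ?_, ?_⟩
      · intro j hj
        match j with
        | 0 => show det2 a (c' 0) = 1; rw [h0]; exact hac
        | Nat.succ m => exact hcons m (by omega)
      · intro kk hk1 hk2
        match kk with
        | 1 =>
          -- the new knee: det2 a (c' 1) > 1
          show 1 < det2 a (c' 1)
          have hcw : det2 c (c' 1) = 1 := by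
            have h := hcons 0 (Nat.zero_le _); rwa [h0] at h
          have hwb : 0 ≤ det2 (c' 1) b := hpos 1 (by omega)
          obtain ⟨hw1, hw2⟩ := cramer a c (c' 1) hac
          have hwc : det2 (c' 1) c = -1 := by
            unfold det2 at hcw ⊢; linarith
          rw [hwc] at hw1 hw2
          set m : ℤ := det2 a (c' 1) with hm
          have key : det2 (c' 1) b = -(det2 a b) + m * det2 c b := by
            unfold det2; rw [hw1, hw2]; ring
          rw [key, hdet, hsval] at hwb
          by_contra hmle
          push_neg at hmle
          have : m * (s:ℤ) ≤ 1 * (s:ℤ) :=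
            mul_le_mul_of_nonneg_right hmle (by positivity)
          have hsd' : (s:ℤ) < d := by exact_mod_cast hslt
          linarith
        | Nat.succ (Nat.succ j) =>
          have h := hknee (j + 1) (by omega) (by omega)
          simpa using h
      · intro j hj
        match j with
        | 0 => show 0 ≤ det2 a b; rw [hdet]; positivity
        | Nat.succ m => exact hpos m (by omega)

/-- Existence part of the arithmetic sub-lemma: given `a, b ∈ ℤ²` with coprime
coordinates and `det(a,b) > 0`, there is a finite sequence `c₀, …, c_{n+1}`
from `a` to `b` with consecutive determinants `1` and `det(c_{k-1}, c_{k+1}) > 1`. -/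
theorem exists_chain_of_coprime_det_pos (a b : ℤ × ℤ)
    (ha : Int.gcd a.1 a.2 = 1) (hb : Int.gcd b.1 b.2 = 1)
    (hab : 0 < det2 a b) :
    ∃ (n : ℕ) (c : ℕ → ℤ × ℤ),
      c 0 = a ∧ c (n + 1) = b ∧
      (∀ j, j ≤ n → det2 (c j) (c (j + 1)) = 1) ∧
      (∀ k, 1 ≤ k → k ≤ n → 1 < det2 (c (k - 1)) (c (k + 1))) := by
  obtain ⟨n, c, h0, hN, hcons, hknee, _⟩ :=
    aux (det2 a b).toNat (by omega) a b ha hb (by omega)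
  exact ⟨n, c, h0, hN, hcons, hknee⟩
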